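/- If ν is p-symmetric then its base-p digit reversal is also p-symmetric: writing ν = Σ_{i=0}^{s} ν_i p^i in base p with ν_s ≠ 0, the number ν' = Σ_{i=0}^{s} ν_{s-i} p^i is p-symmetric. -/

import Mathlib

/-- Sum of the base-`p` digits of `n`. -/
def digitSum (p n : ℕ) : ℕ := (Nat.digits p n).sum

open Finset

/-- ofDigits as a finite sum. -/
lemma ofDigits_eq_sum (b : ℕ) (L : List ℕ) :
    Nat.ofDigits b L = ∑ i ∈ range L.length, L.getD i 0 * b ^ i := by
  induction L with
  | nil => simp [Nat.ofDigits]
  | cons d L ih =>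
    rw [Nat.ofDigits_cons, List.length_cons, Finset.sum_range_succ', ih, Finset.mul_sum]
    simp [pow_succ, mul_comm, mul_assoc, mul_left_comm, add_comm]

lemma getD_digits {p : ℕ} (hp : 2 ≤ p) : ∀ (n j : ℕ), (Nat.digits p n).getD j 0 = n / p ^ j % p
  | n, j => by
    rcases Nat.eq_zero_or_pos n with rfl | hn
    · simp
    · rw [Nat.digits_def' (by omega : 1 < p) hn]
      cases j with
      | zero => simp
      | succ j =>
        have : n / p < n := Nat.div_lt_self hn (by omega)
        simp only [List.getD_cons_succ]
        rw [getD_digits hp (n / p) j, Nat.div_div_eq_div_mul, pow_succ, mul_comm (p^j) p, mul_comm p (p^j)]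

/-- If `a % P + b % P ≡ P - 1` and both are `< P`, their sum is `P - 1`. -/
lemma mod_sum_eq {P a b : ℕ} (hP : 0 < P) (h : (a + b) % P = P - 1) :
    a % P + b % P = P - 1 := by
  have h1 : a % P < P := Nat.mod_lt _ hP
  have h2 : b % P < P := Nat.mod_lt _ hP
  have h3 : (a % P + b % P) % P = P - 1 := by rw [← Nat.add_mod]; exact h
  rcases Nat.lt_or_ge (a % P + b % P) P with hlt | hge
  · rwa [Nat.mod_eq_of_lt hlt] at h3
  · have : a % P + b % P - P < P := by omega
    rw [Nat.mod_eq_sub_mod hge, Nat.mod_eq_of_lt this] at h3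
    omega

lemma pow_sub_one_mod {p i j : ℕ} (hp : 1 ≤ p) (hij : j ≤ i) :
    (p ^ i - 1) % p ^ j = p ^ j - 1 := by
  have hx : 1 ≤ p ^ (i - j) := Nat.one_le_pow _ _ hp
  have hy : 1 ≤ p ^ j := Nat.one_le_pow _ _ hp
  have hpi : p ^ i = p ^ (i - j) * p ^ j := by rw [← pow_add]; congr 1; omega
  have key : p ^ i - 1 = (p ^ (i - j) - 1) * p ^ j + (p ^ j - 1) := by
    rw [hpi, Nat.sub_mul, one_mul]
    have : p ^ j ≤ p ^ (i - j) * p ^ j := Nat.le_mul_of_pos_left _ hx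
    omega
  rw [key, add_comm, Nat.add_mul_mod_self_right, Nat.mod_eq_of_lt (by omega)]

lemma digit_complement {p k a b : ℕ} (hp : 2 ≤ p) (hk : 0 < k)
    (hab : a + b = p ^ k - 1) {j : ℕ} (hj : j < k) :
    a / p ^ j % p + b / p ^ j % p = p - 1 := by
  have hP : 0 < p ^ j := Nat.pow_pos (by omega)
  have h1 : (a + b) % p ^ j = p ^ j - 1 := by
    rw [hab]; exact pow_sub_one_mod (by omega) (by omega)
  have h2 : a % p ^ j + b % p ^ j = p ^ j - 1 := mod_sum_eq hP h1
  have h3 : a / p ^ j + b / p ^ j = p ^ (k - j) - 1 := by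
    have ha := Nat.div_add_mod a (p ^ j)
    have hb := Nat.div_add_mod b (p ^ j)
    have hpk : p ^ k = p ^ (k - j) * p ^ j := by rw [← pow_add]; congr 1; omega
    have hx : 1 ≤ p ^ (k - j) := Nat.one_le_pow _ _ (by omega)
    have key : p ^ j * (a / p ^ j + b / p ^ j) = p ^ j * (p ^ (k - j) - 1) := by
      have : p ^ j ≤ p ^ (k - j) * p ^ j := Nat.le_mul_of_pos_left _ hx
      rw [Nat.mul_sub, mul_one, mul_comm (p ^ j) (p ^ (k - j)), ← hpk]
      rw [Nat.mul_add]
      omega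
    exact Nat.eq_of_mul_eq_mul_left hP key
  have h4' := pow_sub_one_mod (p := p) (i := k - j) (j := 1) (by omega) (by omega)
  rw [pow_one] at h4'
  have h4 : (a / p ^ j + b / p ^ j) % p = p - 1 := by rw [h3]; exact h4'
  have := mod_sum_eq (show 0 < p by omega) h4
  exact this

lemma geom_nat {p : ℕ} (hp : 1 ≤ p) (k : ℕ) : (p - 1) * ∑ t ∈ range k, p ^ t = p ^ k - 1 := by
  induction k with
  | zero => simp
  | succ k ih =>
    rw [Finset.sum_range_succ, Nat.mul_add, ih]
    have h1 : p ^ (k + 1) = p * p ^ k := by ring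
    have h2 : (p - 1) * p ^ k = p * p ^ k - p ^ k := by rw [Nat.sub_mul, one_mul]
    have h4 : 1 ≤ p ^ k := Nat.one_le_pow _ _ hp
    have : p ^ k ≤ p * p ^ k := Nat.le_mul_of_pos_left _ hp
    omega

lemma reverse_mult {p k ℓ n : ℕ} (hp : p.Prime) (hk : 0 < k) (hl : 0 < ℓ)
    (hlk : ℓ < p ^ k) (hn : n = (p ^ k - 1) * ℓ) :
    ∃ ℓ', 0 < ℓ' ∧ ℓ' < p ^ k ∧
      Nat.ofDigits p (Nat.digits p n).reverse = (p ^ k - 1) * ℓ' := by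
  have hp2 : 2 ≤ p := hp.two_le
  have hP1 : 1 ≤ p ^ k := Nat.one_le_pow _ _ (by omega)
  have hPk2 : 2 ≤ p ^ k := by
    calc 2 = 2 ^ 1 := rfl
    _ ≤ p ^ k := Nat.pow_le_pow_left (by omega) 1 |>.trans (Nat.pow_le_pow_right (by omega) hk)
  have hn0 : 0 < n := by
    rw [hn]; exact Nat.mul_pos (by omega) hl
  set d : ℕ → ℕ := fun j => n / p ^ j % p with hd
  set m := (Nat.digits p n).length with hm
  have hm1 : 1 ≤ m := by
    exact Nat.succ_le_of_lt (List.length_pos_iff.mpr (Nat.digits_ne_nil_iff_ne_zero.mpr (by omega)))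
  -- n < p ^ (2 * k)
  have hn2k : n < p ^ (2 * k) := by
    have : n ≤ (p ^ k - 1) * (p ^ k - 1) := by
      rw [hn]; exact Nat.mul_le_mul_left _ (by omega)
    have h2 : (p ^ k - 1) * (p ^ k - 1) < p ^ k * p ^ k := by
      have a1 : (p ^ k - 1) * (p ^ k - 1) ≤ (p ^ k - 1) * p ^ k :=
        Nat.mul_le_mul_left _ (by omega)
      have a2 : (p ^ k - 1) * p ^ k < p ^ k * p ^ k :=
        Nat.mul_lt_mul_of_pos_right (by omega) (by omega)
      omega
    rw [two_mul, pow_add]; omega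
  have hm2k : m ≤ 2 * k := by
    by_contra hcon
    push_neg at hcon
    have h1 : p ^ m ≤ p * n := Nat.base_pow_length_digits_le p n (by omega) (by omega)
    have h2 : p * n < p * p ^ (2 * k) := Nat.mul_lt_mul_of_pos_left hn2k (by omega)
    have h3 : p * p ^ (2 * k) = p ^ (2 * k + 1) := by ring
    have h4 : p ^ (2 * k + 1) ≤ p ^ m := Nat.pow_le_pow_right (by omega) (by omega)
    omega
  -- block structure
  have key : n = (ℓ - 1) * p ^ k + (p ^ k - ℓ) := by
    have h1 : (p ^ k - 1) * ℓ = p ^ k * ℓ - ℓ := by rw [Nat.sub_mul, one_mul]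
    have h2 : (ℓ - 1) * p ^ k = ℓ * p ^ k - p ^ k := by rw [Nat.sub_mul, one_mul]
    have h3 : p ^ k * ℓ = ℓ * p ^ k := mul_comm _ _
    have h4 : ℓ ≤ ℓ * p ^ k := Nat.le_mul_of_pos_right _ (by omega)
    have h5 : p ^ k ≤ ℓ * p ^ k := Nat.le_mul_of_pos_left _ hl
    omega
  have hU : n / p ^ k = ℓ - 1 := by
    rw [key, add_comm, Nat.add_mul_div_right _ _ (by omega : 0 < p ^ k),
      Nat.div_eq_of_lt (by omega), Nat.zero_add]
  have hL : n % p ^ k = p ^ k - ℓ := by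
    rw [key, add_comm, Nat.add_mul_mod_self_right, Nat.mod_eq_of_lt (by omega)]
  have pair : ∀ j, j < k → d j + d (j + k) = p - 1 := by
    intro j hj
    have hdj : d j = (n % p ^ k) / p ^ j % p := by
      have e1 : d j = n % (p ^ j * p) / p ^ j := (Nat.mod_mul_right_div_self n (p ^ j) p).symm
      have e2 : (n % p ^ k) / p ^ j % p = (n % p ^ k) % (p ^ j * p) / p ^ j :=
        (Nat.mod_mul_right_div_self _ (p ^ j) p).symm
      have e3 : (n % p ^ k) % (p ^ j * p) = n % (p ^ j * p) := by
        apply Nat.mod_mod_of_dvd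
        have : p ^ j * p = p ^ (j + 1) := by ring
        rw [this]
        exact pow_dvd_pow p (by omega)
      rw [e1, e2, e3]
    have hdjk : d (j + k) = (n / p ^ k) / p ^ j % p := by
      rw [hd]
      simp only
      rw [Nat.div_div_eq_div_mul, ← pow_add, add_comm k j]
    have hsum : (n % p ^ k) + (n / p ^ k) = p ^ k - 1 := by rw [hU, hL]; omega
    rw [hdj, hdjk]
    exact digit_complement hp2 hk hsum hj
  have dzero : ∀ j, m ≤ j → d j = 0 := by
    intro j hj
    have h1 : n < p ^ m := Nat.lt_base_pow_length_digits (by omega)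
    have h2 : p ^ m ≤ p ^ j := Nat.pow_le_pow_right (by omega) hj
    have : n / p ^ j = 0 := Nat.div_eq_of_lt (by omega)
    rw [hd]; simp only [this, Nat.zero_mod]
  -- R as a sum
  set R := Nat.ofDigits p (Nat.digits p n).reverse with hR
  have hgetD : ∀ t, t < m → (Nat.digits p n).reverse.getD t 0 = d (m - 1 - t) := by
    intro t ht
    have h1 : t < (Nat.digits p n).reverse.length := by rwa [List.length_reverse]
    rw [List.getD_eq_getElem _ _ h1, List.getElem_reverse]
    have h2 : m - 1 - t < (Nat.digits p n).length := by omega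
    rw [← List.getD_eq_getElem _ _ h2, getD_digits hp2]
  have hRsum : R = ∑ t ∈ range m, d (m - 1 - t) * p ^ t := by
    rw [hR, ofDigits_eq_sum, List.length_reverse]
    apply Finset.sum_congr rfl
    intro t ht
    rw [hgetD t (Finset.mem_range.mp ht)]
  -- the window reversal W
  set W := ∑ t ∈ range (2 * k), d (2 * k - 1 - t) * p ^ t with hW
  have hW1 : W = p ^ (2 * k - m) * R := by
    obtain ⟨c, hc⟩ : ∃ c, 2 * k = c + m := ⟨2 * k - m, by omega⟩
    rw [show 2 * k - m = c by omega, hW, hRsum, hc, Finset.sum_range_add]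
    have hz : ∑ t ∈ range c, d (c + m - 1 - t) * p ^ t = 0 := by
      apply Finset.sum_eq_zero
      intro t ht
      rw [Finset.mem_range] at ht
      rw [dzero _ (by omega)]
      ring
    rw [hz, zero_add, Finset.mul_sum]
    apply Finset.sum_congr rfl
    intro t ht
    rw [Finset.mem_range] at ht
    have e1 : c + m - 1 - (c + t) = m - 1 - t := by omega
    rw [e1, pow_add]
    ring
  set A := ∑ t ∈ range k, d (k - 1 - t) * p ^ t with hA
  set B := ∑ t ∈ range k, d (2 * k - 1 - t) * p ^ t with hB
  have hW2 : W = B + p ^ k * A := by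
    rw [hW, show 2 * k = k + k by omega, Finset.sum_range_add]
    congr 1
    · apply Finset.sum_congr rfl
      intro t ht
      congr 2
      omega
    · rw [hA, Finset.mul_sum]
      apply Finset.sum_congr rfl
      intro t ht
      rw [Finset.mem_range] at ht
      have e1 : k + k - 1 - (k + t) = k - 1 - t := by omega
      rw [e1, pow_add]
      ring
  have hAB : A + B = p ^ k - 1 := by
    rw [hA, hB, ← Finset.sum_add_distrib]
    have : ∀ t ∈ range k, d (k - 1 - t) * p ^ t + d (2 * k - 1 - t) * p ^ t
        = (p - 1) * p ^ t := by
      intro t ht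
      rw [Finset.mem_range] at ht
      have e1 : 2 * k - 1 - t = (k - 1 - t) + k := by omega
      rw [e1, ← Nat.add_mul, pair _ (by omega)]
    rw [Finset.sum_congr rfl this, ← Finset.mul_sum, geom_nat (by omega)]
  have hApos : A ≤ p ^ k - 1 := by omega
  have hW3 : W = (p ^ k - 1) * (A + 1) := by
    have e1 : (p ^ k - 1) * (A + 1) = p ^ k * A + p ^ k - (A + 1) := by
      rw [Nat.sub_mul, one_mul, Nat.mul_add, Nat.mul_one]
    have e2 : A + 1 ≤ p ^ k * A + p ^ k := by
      have := Nat.le_mul_of_pos_left A (show 0 < p ^ k by omega)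
      omega
    omega
  -- p ^ (2 * k - m) divides A + 1
  have hcop : Nat.Coprime (p ^ (2 * k - m)) (p ^ k - 1) := by
    apply Nat.Coprime.pow_left
    rw [Nat.Prime.coprime_iff_not_dvd hp]
    intro hdvd
    have h1 : (p ^ k - 1) % p = p - 1 := by
      have := pow_sub_one_mod (p := p) (i := k) (j := 1) (by omega) (by omega)
      rwa [pow_one] at this
    rw [Nat.dvd_iff_mod_eq_zero] at hdvd
    omega
  have hdvdW : p ^ (2 * k - m) ∣ (p ^ k - 1) * (A + 1) := by
    rw [← hW3, hW1]
    exact Dvd.intro _ rfl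
  have hdvd : p ^ (2 * k - m) ∣ A + 1 := (Nat.Coprime.dvd_of_dvd_mul_left hcop hdvdW)
  refine ⟨(A + 1) / p ^ (2 * k - m), ?_, ?_, ?_⟩
  · exact Nat.div_pos (Nat.le_of_dvd (by omega) hdvd) (Nat.pow_pos (by omega))
  · rcases Nat.lt_or_ge m (2 * k) with hlt | hge
    · have h1 : ((A + 1) / p ^ (2 * k - m)) * p ^ (2 * k - m) = A + 1 :=
        Nat.div_mul_cancel hdvd
      have h2 : 2 ≤ p ^ (2 * k - m) := by
        calc 2 ≤ p := by omega
        _ = p ^ 1 := (pow_one p).symm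
        _ ≤ p ^ (2 * k - m) := Nat.pow_le_pow_right (by omega) (by omega)
      have h3 : ((A + 1) / p ^ (2 * k - m)) * 2 ≤ A + 1 := by
        calc ((A + 1) / p ^ (2 * k - m)) * 2 ≤ ((A + 1) / p ^ (2 * k - m)) * p ^ (2 * k - m) :=
          Nat.mul_le_mul_left _ h2
        _ = A + 1 := h1
      omega
    · -- m = 2 * k
      have hmeq : m = 2 * k := by omega
      have hdiv1 : (A + 1) / p ^ (2 * k - m) = A + 1 := by
        rw [hmeq]; simp
      rw [hdiv1]
      -- B > 0 because the leading digit is nonzero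
      have hlead : d (m - 1) ≠ 0 := by
        have h1 : (Nat.digits p n) ≠ [] := Nat.digits_ne_nil_iff_ne_zero.mpr (by omega)
        have h2 := Nat.getLast_digit_ne_zero p (show n ≠ 0 by omega)
        intro h0
        apply h2
        rw [List.getLast_eq_getElem]
        have h4 : (Nat.digits p n).getD (m - 1) 0 = 0 := by
          rw [getD_digits hp2]; exact h0
        rw [List.getD_eq_getElem _ _ (by omega)] at h4
        exact h4
      have hBpos : 0 < B := by
        rw [hB]
        have hmem : (0 : ℕ) ∈ range k := Finset.mem_range.mpr (by omega)
        have hle := Finset.single_le_sum (f := fun t => d (2 * k - 1 - t) * p ^ t)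
          (fun t _ => Nat.zero_le _) hmem
        simp only [Nat.sub_zero, pow_zero, Nat.mul_one] at hle
        have hle' : d (m - 1) ≤ ∑ t ∈ range k, d (2 * k - 1 - t) * p ^ t := by
          rw [show m - 1 = 2 * k - 1 by omega]; exact hle
        omega
      omega
  · -- R = (p ^ k - 1) * ℓ'
    have hPm : 0 < p ^ (2 * k - m) := Nat.pow_pos (by omega)
    apply Nat.eq_of_mul_eq_mul_left hPm
    calc p ^ (2 * k - m) * R = W := hW1.symm
      _ = (p ^ k - 1) * (A + 1) := hW3
      _ = (p ^ k - 1) * (p ^ (2 * k - m) * ((A + 1) / p ^ (2 * k - m))) := by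
          rw [Nat.mul_div_cancel' hdvd]
      _ = p ^ (2 * k - m) * ((p ^ k - 1) * ((A + 1) / p ^ (2 * k - m))) := by ring



lemma digitSum_def {p n : ℕ} (hp : 2 ≤ p) (hn : 0 < n) :
    digitSum p n = n % p + digitSum p (n / p) := by
  unfold digitSum
  rw [Nat.digits_def' (by omega : 1 < p) hn, List.sum_cons]

lemma digitSum_one {p : ℕ} (hp : 2 ≤ p) : digitSum p 1 = 1 := by
  rw [digitSum_def hp (by omega), Nat.mod_eq_of_lt (by omega), Nat.div_eq_of_lt (by omega)]
  simp [digitSum]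

lemma digitSum_add_le {p : ℕ} (hp : 2 ≤ p) :
    ∀ n a b, a + b ≤ n → digitSum p (a + b) ≤ digitSum p a + digitSum p b := by
  intro n
  induction n using Nat.strong_induction_on with
  | _ n ih =>
    intro a b hab
    rcases Nat.eq_zero_or_pos a with rfl | ha
    · simp
    rcases Nat.eq_zero_or_pos b with rfl | hb
    · simp
    have hp0 : 0 < p := by omega
    have hda := Nat.div_add_mod a p
    have hdb := Nat.div_add_mod b p
    have hma : a % p < p := Nat.mod_lt _ hp0
    have hmb : b % p < p := Nat.mod_lt _ hp0
    have hadiv : a / p < a := Nat.div_lt_self ha (by omega)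
    have hbdiv : b / p ≤ b := Nat.div_le_self _ _
    have hdsa : digitSum p a = a % p + digitSum p (a / p) := digitSum_def hp ha
    have hdsb : digitSum p b = b % p + digitSum p (b / p) := digitSum_def hp hb
    have hdsab : digitSum p (a + b) = (a + b) % p + digitSum p ((a + b) / p) :=
      digitSum_def hp (by omega)
    have hdivadd : (a + b) / p = a / p + b / p + if p ≤ a % p + b % p then 1 else 0 :=
      Nat.add_div hp0
    have hmodadd := Nat.add_mod a b p
    rcases Nat.lt_or_ge (a % p + b % p) p with hc | hc
    · have h1 : (a + b) % p = a % p + b % p := by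
        rw [hmodadd, Nat.mod_eq_of_lt hc]
      have h2 : (a + b) / p = a / p + b / p := by rw [hdivadd]; simp [Nat.not_le.mpr hc]
      have h3 : digitSum p (a / p + b / p) ≤ digitSum p (a / p) + digitSum p (b / p) := by
        apply ih (a / p + b / p) (by omega) _ _ (le_refl _)
      rw [hdsab, h1, h2]
      omega
    · have h1 : (a + b) % p = a % p + b % p - p := by
        rw [hmodadd, Nat.mod_eq_sub_mod hc, Nat.mod_eq_of_lt (by omega)]
      have h2 : (a + b) / p = a / p + b / p + 1 := by rw [hdivadd]; simp [hc]
      have hplep : p ≤ a + b := by omega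
      have h3 : digitSum p (a / p + b / p + 1)
          ≤ digitSum p (a / p + b / p) + digitSum p 1 := by
        apply ih (a / p + b / p + 1) ?_ _ _ (le_refl _)
        have h5 : 2 * (a / p) ≤ p * (a / p) := Nat.mul_le_mul_right _ (by omega)
        have h6 : 2 * (b / p) ≤ p * (b / p) := Nat.mul_le_mul_right _ (by omega)
        omega
      have h4 : digitSum p (a / p + b / p) ≤ digitSum p (a / p) + digitSum p (b / p) := by
        apply ih (a / p + b / p) (by omega) _ _ (le_refl _)
      rw [hdsab, h1, h2, digitSum_one hp] at *
      omega

lemma digitSum_add_le' {p : ℕ} (hp : 2 ≤ p) (a b : ℕ) :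
    digitSum p (a + b) ≤ digitSum p a + digitSum p b :=
  digitSum_add_le hp (a + b) a b (le_refl _)

lemma digitSum_le_self {p : ℕ} (n : ℕ) : digitSum p n ≤ n := Nat.digit_sum_le p n

lemma digitSum_lt_self {p n : ℕ} (hp : 2 ≤ p) (hn : p ≤ n) : digitSum p n < n := by
  have h1 : digitSum p n = n % p + digitSum p (n / p) := digitSum_def hp (by omega)
  have h2 : digitSum p (n / p) ≤ n / p := digitSum_le_self _
  have h3 := Nat.div_add_mod n p
  have h4 : 1 ≤ n / p := Nat.one_le_div_iff (by omega) |>.mpr hn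
  have h5 : 2 * (n / p) ≤ p * (n / p) := Nat.mul_le_mul_right _ (by omega)
  omega

lemma digitSum_mul_base {p m : ℕ} (hp : 2 ≤ p) : digitSum p (p * m) = digitSum p m := by
  rcases Nat.eq_zero_or_pos m with rfl | hm
  · simp
  have h0 : 0 < p * m := Nat.mul_pos (by omega) hm
  rw [digitSum_def hp h0, Nat.mul_mod_right, Nat.mul_div_cancel_left _ (by omega : 0 < p)]
  omega

lemma digitSum_mul_base_pow {p m e : ℕ} (hp : 2 ≤ p) : digitSum p (m * p ^ e) = digitSum p m := by
  induction e with
  | zero => simp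
  | succ e ih =>
    have : m * p ^ (e + 1) = p * (m * p ^ e) := by ring
    rw [this, digitSum_mul_base hp, ih]

/-- digit sum of `ofDigits` is at most the sum, strictly less if some entry is ≥ p. -/
lemma digitSum_ofDigits_le {p : ℕ} (hp : 2 ≤ p) :
    ∀ L : List ℕ, digitSum p (Nat.ofDigits p L) ≤ L.sum ∧
      ((∃ x ∈ L, p ≤ x) → digitSum p (Nat.ofDigits p L) < L.sum) := by
  intro L
  induction L with
  | nil => simp [Nat.ofDigits, digitSum]
  | cons x L ih =>
    rw [Nat.ofDigits_cons, List.sum_cons]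
    have h1 : digitSum p (↑x + p * Nat.ofDigits p L)
        ≤ digitSum p x + digitSum p (p * Nat.ofDigits p L) := digitSum_add_le' hp _ _
    rw [digitSum_mul_base hp] at h1
    have h2 : digitSum p x ≤ x := digitSum_le_self x
    constructor
    · omega
    · rintro ⟨y, hy, hyp⟩
      rcases List.mem_cons.mp hy with rfl | hyL
      · have h3 : digitSum p y < y := digitSum_lt_self hp hyp
        omega
      · have h3 : digitSum p (Nat.ofDigits p L) < L.sum := ih.2 ⟨y, hyL, hyp⟩
        omega

open Polynomial in
noncomputable def listPoly (L : List ℕ) : Polynomial ℕ :=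
  L.foldr (fun d q => Polynomial.C d + Polynomial.X * q) 0

open Polynomial

@[simp] lemma listPoly_nil : listPoly [] = 0 := rfl

@[simp] lemma listPoly_cons (d : ℕ) (L : List ℕ) :
    listPoly (d :: L) = C d + X * listPoly L := rfl

lemma eval_listPoly (b : ℕ) (L : List ℕ) : (listPoly L).eval b = Nat.ofDigits b L := by
  induction L with
  | nil => simp [Nat.ofDigits]
  | cons d L ih => simp [Nat.ofDigits_cons, ih]

lemma coeff_listPoly (L : List ℕ) : ∀ i, (listPoly L).coeff i = L.getD i 0 := by
  induction L with
  | nil => simp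
  | cons d L ih =>
    intro i
    cases i with
    | zero => simp [coeff_add, coeff_C_zero, mul_coeff_zero, coeff_X_zero]
    | succ i => simp [coeff_add, coeff_C, coeff_X_mul, ih]

lemma natDegree_listPoly_le (L : List ℕ) : (listPoly L).natDegree ≤ L.length - 1 := by
  rw [natDegree_le_iff_coeff_eq_zero]
  intro m hm
  rw [coeff_listPoly]
  exact List.getD_eq_default _ _ (by omega)

lemma listPoly_reverse (L : List ℕ) :
    listPoly L.reverse = (listPoly L).reflect (L.length - 1) := by
  rcases eq_or_ne L [] with rfl | hL
  · simp [reflect_zero]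
  have hlen : 0 < L.length := List.length_pos_iff.mpr hL
  ext i
  rw [coeff_listPoly, coeff_reflect]
  rcases Nat.lt_or_ge i L.length with hi | hi
  · rw [revAt_le (by omega), coeff_listPoly]
    have h1 : i < L.reverse.length := by rwa [List.length_reverse]
    rw [List.getD_eq_getElem _ _ h1, List.getElem_reverse,
      List.getD_eq_getElem _ _ (by omega : L.length - 1 - i < L.length)]
  · rw [revAt_eq_self_of_lt (by omega), coeff_listPoly,
      List.getD_eq_default _ _ (by rwa [List.length_reverse]),
      List.getD_eq_default _ _ hi]

lemma map_range_sum (f : ℕ → ℕ) (N : ℕ) :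
    ((List.range N).map f).sum = ∑ i ∈ range N, f i := by
  induction N with
  | zero => simp
  | succ N ih => rw [List.range_succ, Finset.sum_range_succ, List.map_append, List.sum_append, ih]; simp

lemma digits_reverse {p n : ℕ} (hp : 2 ≤ p) (hn : 0 < n) (hpn : ¬ p ∣ n) :
    Nat.digits p (Nat.ofDigits p (Nat.digits p n).reverse) = (Nat.digits p n).reverse := by
  apply Nat.digits_ofDigits p (by omega)
  · intro l hl
    exact Nat.digits_lt_base (by omega) (List.mem_reverse.mp hl)
  · intro hne
    have h1 : Nat.digits p n = n % p :: Nat.digits p (n / p) :=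
      Nat.digits_def' (by omega : 1 < p) hn
    have h2 : (Nat.digits p n).reverse
        = (Nat.digits p (n / p)).reverse ++ [n % p] := by rw [h1, List.reverse_cons]
    have h3 : (Nat.digits p n).reverse.getLast hne = n % p := by
      simp [h2]
    rw [h3]
    intro h0
    exact hpn (Nat.dvd_of_mod_eq_zero h0)

lemma rev_carryfree {p a b : ℕ} (hp : p.Prime) (ha : 0 < a) (hb : 0 < b)
    (hpa : ¬ p ∣ a) (hpb : ¬ p ∣ b)
    (hs : digitSum p (a * b) = digitSum p a * digitSum p b) :
    Nat.ofDigits p (Nat.digits p a).reverse * Nat.ofDigits p (Nat.digits p b).reverse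
      = Nat.ofDigits p (Nat.digits p (a * b)).reverse ∧
    Nat.digits p (Nat.ofDigits p (Nat.digits p (a * b)).reverse)
      = (Nat.digits p (a * b)).reverse := by
  have hp2 : 2 ≤ p := hp.two_le
  set D := Nat.digits p a with hD
  set E := Nat.digits p b with hE
  have hDne : D ≠ [] := Nat.digits_ne_nil_iff_ne_zero.mpr (by omega)
  have hEne : E ≠ [] := Nat.digits_ne_nil_iff_ne_zero.mpr (by omega)
  have hDlen : 1 ≤ D.length := List.length_pos_iff.mpr hDne
  have hElen : 1 ≤ E.length := List.length_pos_iff.mpr hEne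
  set f := listPoly D with hf
  set g := listPoly E with hg
  set hq := f * g with hh
  have hfa : f.eval p = a := by rw [hf, eval_listPoly, hD, Nat.ofDigits_digits]
  have hgb : g.eval p = b := by rw [hg, eval_listPoly, hE, Nat.ofDigits_digits]
  set N := D.length + E.length - 1 with hN
  have hN1 : 1 ≤ N := by omega
  have hdegf : f.natDegree ≤ D.length - 1 := natDegree_listPoly_le _
  have hdegg : g.natDegree ≤ E.length - 1 := natDegree_listPoly_le _
  have hdegh : hq.natDegree < N := by
    have h1 := natDegree_mul_le (p := f) (q := g)
    rw [← hh] at h1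
    omega
  set CL := (List.range N).map hq.coeff with hCL
  have hCLlen : CL.length = N := by simp [hCL]
  have hCLgetD : ∀ i, i < N → CL.getD i 0 = hq.coeff i := by
    intro i hi
    rw [List.getD_eq_getElem _ _ (by omega : i < CL.length)]
    simp [hCL]
  have hofCL : Nat.ofDigits p CL = a * b := by
    rw [ofDigits_eq_sum, hCLlen]
    rw [Finset.sum_congr rfl (fun i hi => by
      rw [hCLgetD i (Finset.mem_range.mp hi)])]
    rw [← Polynomial.eval_eq_sum_range' hdegh p, hh, eval_mul, hfa, hgb]
  have hsumCL : CL.sum = digitSum p a * digitSum p b := by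
    rw [hCL, map_range_sum]
    have e1 : ∑ i ∈ range N, hq.coeff i = hq.eval 1 := by
      rw [Polynomial.eval_eq_sum_range' hdegh 1]
      simp
    rw [e1, hh, eval_mul]
    rw [hf, hg, eval_listPoly, eval_listPoly, Nat.ofDigits_one, Nat.ofDigits_one]
    rfl
  have hall : ∀ x ∈ CL, x < p := by
    by_contra hcon
    push_neg at hcon
    obtain ⟨x, hx, hpx⟩ := hcon
    have := (digitSum_ofDigits_le hp2 CL).2 ⟨x, hx, hpx⟩
    rw [hofCL, hsumCL] at this
    omega
  -- leading coefficients
  have hfl : f.coeff (D.length - 1) ≠ 0 := by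
    rw [hf, coeff_listPoly]
    have h1 := Nat.getLast_digit_ne_zero p (show a ≠ 0 by omega)
    rw [List.getD_eq_getElem _ _ (by omega : D.length - 1 < D.length)]
    rw [List.getLast_eq_getElem] at h1
    exact h1
  have hgl : g.coeff (E.length - 1) ≠ 0 := by
    rw [hg, coeff_listPoly]
    have h1 := Nat.getLast_digit_ne_zero p (show b ≠ 0 by omega)
    rw [List.getD_eq_getElem _ _ (by omega : E.length - 1 < E.length)]
    rw [List.getLast_eq_getElem] at h1
    exact h1
  have hf0 : f ≠ 0 := fun h0 => hfl (by simp [h0])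
  have hg0 : g ≠ 0 := fun h0 => hgl (by simp [h0])
  have hdf : f.natDegree = D.length - 1 :=
    le_antisymm hdegf (le_natDegree_of_ne_zero hfl)
  have hdg : g.natDegree = E.length - 1 :=
    le_antisymm hdegg (le_natDegree_of_ne_zero hgl)
  have hdegh_eq : hq.natDegree = N - 1 := by
    rw [hh, natDegree_mul hf0 hg0, hdf, hdg]; omega
  have hlead : hq.coeff (N - 1) ≠ 0 := by
    rw [← hdegh_eq, ← leadingCoeff, hh, leadingCoeff_mul]
    exact Nat.mul_ne_zero (leadingCoeff_ne_zero.mpr hf0) (leadingCoeff_ne_zero.mpr hg0)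
  have hCLne : CL ≠ [] := by
    intro h0
    rw [h0] at hCLlen
    simp at hCLlen
    omega
  have hCLlast : CL.getLast hCLne ≠ 0 := by
    rw [List.getLast_eq_getElem]
    have : CL[CL.length - 1] = hq.coeff (N - 1) := by
      rw [← List.getD_eq_getElem _ 0 (by omega), hCLlen, hCLgetD _ (by omega)]
    rw [this]
    exact hlead
  have hdigCL : Nat.digits p (a * b) = CL := by
    rw [← hofCL]
    exact (Nat.digits_ofDigits p (by omega) CL hall (fun _ => hCLlast)).symm ▸ rfl
  -- polynomial identity for reversal
  have hrev : listPoly CL = hq := by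
    ext i
    rw [coeff_listPoly]
    rcases Nat.lt_or_ge i N with hi | hi
    · exact hCLgetD i hi
    · rw [List.getD_eq_default _ _ (by omega)]
      exact (coeff_eq_zero_of_natDegree_lt (by omega)).symm
  have key : Nat.ofDigits p D.reverse * Nat.ofDigits p E.reverse
      = Nat.ofDigits p CL.reverse := by
    rw [← eval_listPoly, ← eval_listPoly, ← eval_listPoly,
      listPoly_reverse, listPoly_reverse, listPoly_reverse, hrev, hCLlen, ← eval_mul]
    congr 1
    rw [show N - 1 = (D.length - 1) + (E.length - 1) by omega]
    exact (reflect_mul f g hdegf hdegg).symm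
  constructor
  · rw [hdigCL]; exact key
  · rw [hdigCL]
    apply Nat.digits_ofDigits p (by omega)
    · intro l hl
      exact hall _ (List.mem_reverse.mp hl)
    · intro hne
      have h2 : CL.reverse = CL.tail.reverse ++ [CL.head hCLne] := by
        conv_lhs => rw [← List.cons_head_tail hCLne]
        rw [List.reverse_cons]
      have h3 : CL.reverse.getLast hne = CL.head hCLne := by simp [h2]
      rw [h3]
      have h4 : CL.head hCLne = hq.coeff 0 := by
        rw [List.head_eq_getElem, ← List.getD_eq_getElem _ 0 (by omega), hCLgetD _ (by omega)]
      rw [h4, hh, mul_coeff_zero, hf, hg, coeff_listPoly, coeff_listPoly]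
      have hD0 : D.getD 0 0 = a % p := by rw [hD, getD_digits hp2]; simp
      have hE0 : E.getD 0 0 = b % p := by rw [hE, getD_digits hp2]; simp
      rw [hD0, hE0]
      have : a % p ≠ 0 := fun h0 => hpa (Nat.dvd_of_mod_eq_zero h0)
      have : b % p ≠ 0 := fun h0 => hpb (Nat.dvd_of_mod_eq_zero h0)
      positivity

/-- An integer `ν > 1` coprime to `p` is `p`-symmetric if there exist positive
integers `w`, `k`, `ℓ` with `ℓ < p^k` such that `ν * w = (p^k - 1) * ℓ` and the
base-`p` product `ν * w` is carry-free, i.e. `s_p(ν*w) = s_p(ν) * s_p(w)`. -/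
def IsPSymmetric (p ν : ℕ) : Prop :=
  1 < ν ∧ Nat.Coprime ν p ∧
    ∃ w k ℓ : ℕ, 0 < w ∧ 0 < k ∧ 0 < ℓ ∧ ℓ < p ^ k ∧
      ν * w = (p ^ k - 1) * ℓ ∧
      digitSum p (ν * w) = digitSum p ν * digitSum p w

theorem pSymmetric_digit_reversal (p ν : ℕ) (hp : p.Prime)
    (h : IsPSymmetric p ν) :
    IsPSymmetric p (Nat.ofDigits p (Nat.digits p ν).reverse) := by
  obtain ⟨hν1, hcop, w, k, ℓ, hw, hk, hl, hlk, heq, hsum⟩ := h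
  have hp2 : 2 ≤ p := hp.two_le
  have hν0 : 0 < ν := by omega
  have hpν : ¬ p ∣ ν := (hp.coprime_iff_not_dvd).mp hcop.symm
  -- strip powers of p from w
  obtain ⟨e, w₀, hpw₀, hw_eq⟩ :=
    Nat.exists_eq_pow_mul_and_not_dvd (show w ≠ 0 by omega) p hp.ne_one
  have hw₀ : 0 < w₀ := by
    rcases Nat.eq_zero_or_pos w₀ with rfl | h0
    · rw [Nat.mul_zero] at hw_eq; omega
    · exact h0
  have hnd : ¬ p ∣ (p ^ k - 1) := by
    intro hdvd
    have h1 : (p ^ k - 1) % p = p - 1 := by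
      have := pow_sub_one_mod (p := p) (i := k) (j := 1) (by omega) (by omega)
      rwa [pow_one] at this
    rw [Nat.dvd_iff_mod_eq_zero] at hdvd
    omega
  have hPcop : Nat.Coprime (p ^ e) (p ^ k - 1) :=
    Nat.Coprime.pow_left _ ((hp.coprime_iff_not_dvd).mpr hnd)
  have hdvdl : p ^ e ∣ ℓ := by
    apply hPcop.dvd_of_dvd_mul_left
    refine ⟨ν * w₀, ?_⟩
    rw [← heq, hw_eq]; ring
  set ℓ₀ := ℓ / p ^ e with hℓ₀
  have hpe : 0 < p ^ e := Nat.pow_pos (by omega)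
  have hll : ℓ = p ^ e * ℓ₀ := (Nat.mul_div_cancel' hdvdl).symm
  have heq₀ : ν * w₀ = (p ^ k - 1) * ℓ₀ := by
    apply Nat.eq_of_mul_eq_mul_left hpe
    calc p ^ e * (ν * w₀) = ν * (p ^ e * w₀) := by ring
      _ = (p ^ k - 1) * ℓ := by rw [← hw_eq, heq]
      _ = (p ^ k - 1) * (p ^ e * ℓ₀) := by rw [← hll]
      _ = p ^ e * ((p ^ k - 1) * ℓ₀) := by ring
  have hl₀ : 0 < ℓ₀ := by
    rcases Nat.eq_zero_or_pos ℓ₀ with h0 | h0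
    · rw [h0, Nat.mul_zero] at hll; omega
    · exact h0
  have hlk₀ : ℓ₀ < p ^ k := by
    have : ℓ₀ ≤ ℓ := Nat.div_le_self _ _
    omega
  have hsum₀ : digitSum p (ν * w₀) = digitSum p ν * digitSum p w₀ := by
    have e1 : digitSum p (ν * w) = digitSum p (ν * w₀) := by
      rw [hw_eq, show ν * (p ^ e * w₀) = (ν * w₀) * p ^ e by ring, digitSum_mul_base_pow hp2]
    have e2 : digitSum p w = digitSum p w₀ := by
      rw [hw_eq, show p ^ e * w₀ = w₀ * p ^ e by ring, digitSum_mul_base_pow hp2]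
    rw [← e1, hsum, e2]
  obtain ⟨hmul, hdig⟩ := rev_carryfree hp hν0 hw₀ hpν hpw₀ hsum₀
  obtain ⟨ℓ', hl', hlk', hrl⟩ := reverse_mult hp hk hl₀ hlk₀ heq₀
  set ν' := Nat.ofDigits p (Nat.digits p ν).reverse with hν'
  set w' := Nat.ofDigits p (Nat.digits p w₀).reverse with hw'
  have hdigν : Nat.digits p ν' = (Nat.digits p ν).reverse := digits_reverse hp2 hν0 hpν
  have hdigw : Nat.digits p w' = (Nat.digits p w₀).reverse := digits_reverse hp2 hw₀ hpw₀
  have hνne : Nat.digits p ν ≠ [] := Nat.digits_ne_nil_iff_ne_zero.mpr (by omega)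
  have hwne : Nat.digits p w₀ ≠ [] := Nat.digits_ne_nil_iff_ne_zero.mpr (by omega)
  have hν'0 : ν' ≠ 0 := by
    intro h0
    rw [h0, Nat.digits_zero] at hdigν
    exact hνne (List.reverse_eq_nil_iff.mp hdigν.symm)
  have hw'0 : w' ≠ 0 := by
    intro h0
    rw [h0, Nat.digits_zero] at hdigw
    exact hwne (List.reverse_eq_nil_iff.mp hdigw.symm)
  -- ν' mod p is the leading digit of ν
  have hstruct : (Nat.digits p ν).reverse
      = (Nat.digits p ν).getLast hνne :: (Nat.digits p ν).dropLast.reverse := by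
    conv_lhs => rw [← List.dropLast_append_getLast hνne]
    rw [List.reverse_append]
    simp
  have hν'mod : ν' % p = (Nat.digits p ν).getLast hνne := by
    rw [hν', hstruct, Nat.ofDigits_cons, Nat.add_mul_mod_self_left, Nat.mod_eq_of_lt]
    exact Nat.digits_lt_base (by omega) (List.getLast_mem hνne)
  have hν'modne : ν' % p ≠ 0 := by
    rw [hν'mod]
    exact Nat.getLast_digit_ne_zero p (by omega)
  refine ⟨?_, ?_, w', k, ℓ', ?_, hk, hl', hlk', ?_, ?_⟩
  · -- 1 < ν'
    rcases Nat.lt_or_ge ν' 2 with hle | hge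
    · exfalso
      have : ν' = 1 := by omega
      rw [this] at hdigν
      have h1 : Nat.digits p 1 = [1] := by
        rw [Nat.digits_def' (by omega : 1 < p) (by omega), Nat.mod_eq_of_lt (by omega),
          Nat.div_eq_of_lt (by omega), Nat.digits_zero]
      rw [h1] at hdigν
      have h2 : Nat.digits p ν = [1] := by
        have := congrArg List.reverse hdigν
        simpa using this.symm
      have h3 : ν = 1 := by
        have := Nat.ofDigits_digits p ν
        rw [h2] at this
        simpa [Nat.ofDigits] using this.symm
      omega
    · omega
  · -- coprime
    apply Nat.Coprime.symm
    rw [hp.coprime_iff_not_dvd]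
    intro hdvd
    exact hν'modne (Nat.eq_zero_of_dvd_of_lt hdvd |> fun _ => by
      rwa [Nat.dvd_iff_mod_eq_zero] at hdvd)
  · omega
  · rw [hmul]
    exact hrl
  · have hsν : digitSum p ν' = digitSum p ν := by
      unfold digitSum
      rw [hdigν, List.sum_reverse]
    have hsw : digitSum p w' = digitSum p w₀ := by
      unfold digitSum
      rw [hdigw, List.sum_reverse]
    rw [hmul]
    have h1 : digitSum p (Nat.ofDigits p (Nat.digits p (ν * w₀)).reverse)
        = digitSum p (ν * w₀) := by
      unfold digitSum
      rw [hdig, List.sum_reverse]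
    rw [h1, hsν, hsw, hsum₀]
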